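/- Let X be a nonnegative random variable with support (0,l), 0 < l < ∞, cumulative distribution function F, and finite cumulative entropy CE(X) = −∫_0^l F(x) ln F(x) dx. Then CE_α(X) ≤ (l^{1−α}/Γ(α+1)) (CE(X))^α for 0 < α ≤ 1, and CE_α(X) ≥ (l^{1−α}/Γ(α+1)) (CE(X))^α for α ≥ 1. -/

import Mathlib

open MeasureTheory Set
open scoped ProbabilityTheory

lemma aux_mul_neg_log_le (t : ℝ) (h0 : 0 ≤ t) : t * (-Real.log t) ≤ 1 - t := by
  rcases eq_or_lt_of_le h0 with h|h
  · simp [← h]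
  · have hlog : Real.log t⁻¹ ≤ t⁻¹ - 1 := Real.log_le_sub_one_of_pos (by positivity)
    rw [Real.log_inv] at hlog
    calc t * (-Real.log t) ≤ t * (t⁻¹ - 1) := mul_le_mul_of_nonneg_left hlog h0
      _ = 1 - t := by field_simp

lemma aux_bound (α t : ℝ) (hα : 0 < α) (h0 : 0 ≤ t) (h1 : t ≤ 1) :
    t * (-Real.log t) ^ α ≤ α ^ α := by
  rcases eq_or_lt_of_le h0 with h|h
  · rw [← h]
    simp [Real.zero_rpow hα.ne']
    positivity
  · set s : ℝ := t ^ α⁻¹ with hs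
    have hs0 : 0 < s := Real.rpow_pos_of_pos h _
    have hs1 : s ≤ 1 := Real.rpow_le_one h0 h1 (by positivity)
    have hts : t = s ^ α := by
      rw [hs, ← Real.rpow_mul h0, inv_mul_cancel₀ hα.ne', Real.rpow_one]
    have hlog : -Real.log t = α * (-Real.log s) := by
      rw [hs, Real.log_rpow h]; field_simp
    have hls : 0 ≤ -Real.log s := by
      rw [neg_nonneg]; exact Real.log_nonpos hs0.le hs1
    calc t * (-Real.log t) ^ α = s ^ α * (α * (-Real.log s)) ^ α := by rw [← hts, ← hlog]
      _ = α ^ α * (s * (-Real.log s)) ^ α := by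
          rw [Real.mul_rpow hα.le hls, Real.mul_rpow hs0.le hls]; ring
      _ ≤ α ^ α * 1 := by
          apply mul_le_mul_of_nonneg_left _ (by positivity)
          apply Real.rpow_le_one (mul_nonneg hs0.le hls) _ hα.le
          have := aux_mul_neg_log_le s hs0.le
          linarith
      _ = α ^ α := mul_one _

lemma main_ineq (F : ℝ → ℝ) (hmono : Monotone F) (h0 : ∀ x, 0 ≤ F x) (h1 : ∀ x, F x ≤ 1)
    (l : ℝ) (hl : 0 < l)
    (hfi : IntegrableOn (fun x => F x * (-Real.log (F x))) (Set.Ioo (0:ℝ) l))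
    (α : ℝ) (hα : 0 < α) :
    (α ≤ 1 → ∫ x in Set.Ioo (0:ℝ) l, F x * (-Real.log (F x)) ^ α
        ≤ l ^ (1 - α) * (∫ x in Set.Ioo (0:ℝ) l, F x * (-Real.log (F x))) ^ α)
    ∧ (1 ≤ α → l ^ (1 - α) * (∫ x in Set.Ioo (0:ℝ) l, F x * (-Real.log (F x))) ^ α
        ≤ ∫ x in Set.Ioo (0:ℝ) l, F x * (-Real.log (F x)) ^ α) := by
  set f : ℝ → ℝ := fun x => F x * (-Real.log (F x)) with hf
  set I : ℝ := ∫ x in Set.Ioo (0:ℝ) l, f x with hI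
  have hFmeas : Measurable F := hmono.measurable
  have hfmeas : Measurable f := hFmeas.mul (Real.measurable_log.comp hFmeas).neg
  have hfnn : ∀ x, 0 ≤ f x := fun x =>
    mul_nonneg (h0 x) (neg_nonneg.2 (Real.log_nonpos (h0 x) (h1 x)))
  have hfle1 : ∀ x, f x ≤ 1 := fun x => by
    have := aux_mul_neg_log_le (F x) (h0 x); have := h0 x; simp only [hf]; linarith
  have hI0 : 0 ≤ I := setIntegral_nonneg measurableSet_Ioo fun x _ => hfnn x
  have hvol : (volume (Set.Ioo (0:ℝ) l)).toReal = l := by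
    rw [Real.volume_Ioo]; simp [hl.le]
  have hne : volume (Set.Ioo (0:ℝ) l) ≠ 0 := by
    rw [Real.volume_Ioo]; simp [hl]
  have hfin : volume (Set.Ioo (0:ℝ) l) ≠ ⊤ := by
    rw [Real.volume_Ioo]; exact ENNReal.ofReal_ne_top
  have hcont : Continuous (fun x : ℝ => x ^ α) := Real.continuous_rpow_const hα.le
  -- integrability of f^α
  have hgα : IntegrableOn (fun x => f x ^ α) (Set.Ioo (0:ℝ) l) := by
    apply Integrable.mono' (integrableOn_const (C := (1:ℝ)) hfin)
      ((hcont.measurable.comp hfmeas).aestronglyMeasurable)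
    refine ae_of_all _ fun x => ?_
    simp only [Function.comp]
    rw [Real.norm_eq_abs, abs_of_nonneg (Real.rpow_nonneg (hfnn x) α)]
    exact Real.rpow_le_one (hfnn x) (hfle1 x) hα.le
  -- integrability of F(-log F)^α
  have hT : IntegrableOn (fun x => F x * (-Real.log (F x)) ^ α) (Set.Ioo (0:ℝ) l) := by
    apply Integrable.mono'
      (integrableOn_const hfin :
        IntegrableOn (fun _ => α ^ α) _ _)
      (hFmeas.mul (hcont.measurable.comp (Real.measurable_log.comp hFmeas).neg)).aestronglyMeasurable
    refine ae_of_all _ fun x => ?_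
    simp only [Function.comp_apply, Pi.mul_apply, Pi.neg_apply]
    have hnl : 0 ≤ -Real.log (F x) := neg_nonneg.2 (Real.log_nonpos (h0 x) (h1 x))
    rw [Real.norm_eq_abs, abs_of_nonneg (mul_nonneg (h0 x) (Real.rpow_nonneg hnl α))]
    exact aux_bound α (F x) hα (h0 x) (h1 x)
  -- pointwise comparison with f^α
  have hpt : ∀ x, f x ^ α = F x ^ α * (-Real.log (F x)) ^ α := fun x =>
    Real.mul_rpow (h0 x) (neg_nonneg.2 (Real.log_nonpos (h0 x) (h1 x)))
  have hptle : α ≤ 1 → ∀ x, F x * (-Real.log (F x)) ^ α ≤ f x ^ α := by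
    intro hα1 x
    rw [hpt x]
    rcases eq_or_lt_of_le (h0 x) with h|h
    · rw [← h]; simp [Real.zero_rpow hα.ne']
    · refine mul_le_mul_of_nonneg_right ?_ (Real.rpow_nonneg
        (neg_nonneg.2 (Real.log_nonpos (h0 x) (h1 x))) α)
      calc F x = F x ^ (1:ℝ) := (Real.rpow_one _).symm
        _ ≤ F x ^ α := Real.rpow_le_rpow_of_exponent_ge h (h1 x) hα1
  have hptge : 1 ≤ α → ∀ x, f x ^ α ≤ F x * (-Real.log (F x)) ^ α := by
    intro hα1 x
    rw [hpt x]
    rcases eq_or_lt_of_le (h0 x) with h|h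
    · rw [← h]; simp [Real.zero_rpow hα.ne']
    · refine mul_le_mul_of_nonneg_right ?_ (Real.rpow_nonneg
        (neg_nonneg.2 (Real.log_nonpos (h0 x) (h1 x))) α)
      calc F x ^ α ≤ F x ^ (1:ℝ) := Real.rpow_le_rpow_of_exponent_ge h (h1 x) hα1
        _ = F x := Real.rpow_one _
  -- averages
  have havg : ∀ g : ℝ → ℝ, (⨍ x in Set.Ioo (0:ℝ) l, g x) = l⁻¹ * ∫ x in Set.Ioo (0:ℝ) l, g x := by
    intro g
    rw [setAverage_eq, measureReal_def, hvol, smul_eq_mul]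
  have hB : (l⁻¹ * I) ^ α = (l ^ α)⁻¹ * I ^ α := by
    rw [Real.mul_rpow (inv_nonneg.2 hl.le) hI0, Real.inv_rpow hl.le]
  have hrw : l ^ (1 - α) * I ^ α = l * ((l ^ α)⁻¹ * I ^ α) := by
    rw [Real.rpow_sub hl, Real.rpow_one]
    have : (0:ℝ) < l ^ α := Real.rpow_pos_of_pos hl α
    field_simp
  constructor
  · intro hα1
    have hcc : ConcaveOn ℝ (Set.Ici 0) (fun x : ℝ => x ^ α) := Real.concaveOn_rpow hα.le hα1
    have hjen := hcc.le_map_set_average hcont.continuousOn isClosed_Ici hne hfin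
      (ae_of_all _ fun x => hfnn x) hfi hgα
    rw [havg, havg] at hjen
    have h2 : l⁻¹ * ∫ x in Set.Ioo (0:ℝ) l, F x * (-Real.log (F x)) ^ α
        ≤ l⁻¹ * ∫ x in Set.Ioo (0:ℝ) l, f x ^ α := by
      apply mul_le_mul_of_nonneg_left _ (by positivity)
      exact integral_mono hT hgα (hptle hα1)
    have h3 := h2.trans hjen
    have h4 := mul_le_mul_of_nonneg_left h3 hl.le
    rw [hrw, ← hB]
    calc (∫ x in Set.Ioo (0:ℝ) l, F x * (-Real.log (F x)) ^ α)
        = l * (l⁻¹ * ∫ x in Set.Ioo (0:ℝ) l, F x * (-Real.log (F x)) ^ α) := by field_simp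
      _ ≤ l * (l⁻¹ * I) ^ α := h4
  · intro hα1
    have hcc : ConvexOn ℝ (Set.Ici 0) (fun x : ℝ => x ^ α) := convexOn_rpow hα1
    have hjen := hcc.map_set_average_le hcont.continuousOn isClosed_Ici hne hfin
      (ae_of_all _ fun x => hfnn x) hfi hgα
    rw [havg, havg] at hjen
    have h2 : l⁻¹ * ∫ x in Set.Ioo (0:ℝ) l, f x ^ α
        ≤ l⁻¹ * ∫ x in Set.Ioo (0:ℝ) l, F x * (-Real.log (F x)) ^ α := by
      apply mul_le_mul_of_nonneg_left _ (by positivity)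
      exact integral_mono hgα hT (hptge hα1)
    have h3 := hjen.trans h2
    have h4 := mul_le_mul_of_nonneg_left h3 hl.le
    rw [hrw, ← hB]
    calc l * (l⁻¹ * I) ^ α
        ≤ l * (l⁻¹ * ∫ x in Set.Ioo (0:ℝ) l, F x * (-Real.log (F x)) ^ α) := h4
      _ = ∫ x in Set.Ioo (0:ℝ) l, F x * (-Real.log (F x)) ^ α := by field_simp

/-- for a nonnegative random variable `X` with support `(0,l)`, `0 < l < ∞`,
CDF `F`, and finite cumulative entropy `CE(X) = −∫_0^l F ln F`, one has
`CE_α(X) ≤ (l^{1−α}/Γ(α+1)) (CE(X))^α` for `0 < α ≤ 1` and the reverse inequality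
for `α ≥ 1`. -/
theorem fgce_bound_via_cumulative_entropy
    {Ω : Type*} [MeasureSpace Ω] [IsProbabilityMeasure (ℙ : Measure Ω)]
    (X : Ω → ℝ) (hX : Measurable X)
    (l : ℝ) (hl : 0 < l)
    (hXnn : ∀ ω, 0 ≤ X ω)
    (hsupp : ∀ᵐ ω ∂ℙ, X ω ∈ Set.Ioo 0 l)
    (F : ℝ → ℝ) (hF : ∀ x, F x = (ℙ {ω | X ω ≤ x}).toReal)
    (hCEfin : IntegrableOn (fun x => F x * Real.log (F x)) (Set.Ioo (0:ℝ) l))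
    (α : ℝ) :
    (0 < α → α ≤ 1 →
      (1 / Real.Gamma (α + 1)) * ∫ x in Set.Ioo (0:ℝ) l, F x * (-Real.log (F x)) ^ α
        ≤ l ^ (1 - α) / Real.Gamma (α + 1) *
            (-∫ x in Set.Ioo (0:ℝ) l, F x * Real.log (F x)) ^ α)
    ∧ (1 ≤ α →
      (1 / Real.Gamma (α + 1)) * ∫ x in Set.Ioo (0:ℝ) l, F x * (-Real.log (F x)) ^ α
        ≥ l ^ (1 - α) / Real.Gamma (α + 1) *
            (-∫ x in Set.Ioo (0:ℝ) l, F x * Real.log (F x)) ^ α) := by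
  have hmono : Monotone F := by
    intro a b hab
    rw [hF a, hF b]
    exact ENNReal.toReal_mono (measure_ne_top _ _)
      (measure_mono fun ω hω => le_trans hω hab)
  have h0 : ∀ x, 0 ≤ F x := fun x => by rw [hF x]; exact ENNReal.toReal_nonneg
  have h1 : ∀ x, F x ≤ 1 := fun x => by
    rw [hF x, ← ENNReal.toReal_one]
    exact ENNReal.toReal_mono ENNReal.one_ne_top prob_le_one
  have hfi : IntegrableOn (fun x => F x * (-Real.log (F x))) (Set.Ioo (0:ℝ) l) := by
    have heq : (fun x => F x * (-Real.log (F x))) = fun x => -(F x * Real.log (F x)) := by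
      funext x; ring
    rw [heq]; exact hCEfin.neg
  have hneg : (-∫ x in Set.Ioo (0:ℝ) l, F x * Real.log (F x))
      = ∫ x in Set.Ioo (0:ℝ) l, F x * (-Real.log (F x)) := by
    rw [← integral_neg]
    congr 1; funext x; ring
  have hΓ : 0 < Real.Gamma (α + 1) ∨ True := Or.inr trivial
  constructor
  · intro hα hα1
    have hΓpos : 0 < Real.Gamma (α + 1) := Real.Gamma_pos_of_pos (by linarith)
    have hmain := (main_ineq F hmono h0 h1 l hl hfi α hα).1 hα1
    rw [hneg]
    have h2 : l ^ (1 - α) / Real.Gamma (α + 1)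
        * (∫ x in Set.Ioo (0:ℝ) l, F x * (-Real.log (F x))) ^ α
        = (1 / Real.Gamma (α + 1))
        * (l ^ (1 - α) * (∫ x in Set.Ioo (0:ℝ) l, F x * (-Real.log (F x))) ^ α) := by ring
    rw [h2]
    exact mul_le_mul_of_nonneg_left hmain (by positivity)
  · intro hα1
    have hα : 0 < α := lt_of_lt_of_le one_pos hα1
    have hΓpos : 0 < Real.Gamma (α + 1) := Real.Gamma_pos_of_pos (by linarith)
    have hmain := (main_ineq F hmono h0 h1 l hl hfi α hα).2 hα1
    rw [ge_iff_le, hneg]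
    have h2 : l ^ (1 - α) / Real.Gamma (α + 1)
        * (∫ x in Set.Ioo (0:ℝ) l, F x * (-Real.log (F x))) ^ α
        = (1 / Real.Gamma (α + 1))
        * (l ^ (1 - α) * (∫ x in Set.Ioo (0:ℝ) l, F x * (-Real.log (F x))) ^ α) := by ring
    rw [h2]
    exact mul_le_mul_of_nonneg_left hmain (by positivity)
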